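/- arXiv:1107.1218 — 2 statements merged into one kernel-verified Lean document; each statement's English description precedes it below -/
import Mathlib

section
/- A proper metric space X has asymptotic dimension 0 if and only if for every C > 0 the diameters of all C-chains in X are bounded from above, where a C-chain is a finite sequence x₁,…,x_k with d(x_i, x_{i+1}) ≤ C for all i. -/
/-- Turn a `ReflTransGen` path for the relation `dist · · ≤ D` into a finite chain. -/
lemma rtg_to_chain {X : Type*} [MetricSpace X] {D : ℝ} {a b : X}
    (h : Relation.ReflTransGen (fun u v : X => dist u v ≤ D) a b) :
    ∃ k : ℕ, ∃ x : Fin (k + 1) → X, x 0 = a ∧ x (Fin.last k) = b ∧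
      ∀ i : Fin k, dist (x i.castSucc) (x i.succ) ≤ D := by
  induction h with
  | refl => exact ⟨0, fun _ => a, rfl, rfl, fun i => i.elim0⟩
  | @tail b c _ hbc ih =>
    obtain ⟨k, x, hx0, hxl, hxd⟩ := ih
    refine ⟨k + 1, Fin.snoc x c, ?_, ?_, ?_⟩
    · rw [show (0 : Fin (k + 2)) = Fin.castSucc 0 by rfl, Fin.snoc_castSucc, hx0]
    · simp
    · intro i
      rcases eq_or_ne i (Fin.last k) with h | h
      · subst h
        rw [Fin.succ_last, Fin.snoc_last, Fin.snoc_castSucc, hxl]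
        exact hbc
      · obtain ⟨j, rfl⟩ := Fin.exists_castSucc_eq.mpr h
        rw [Fin.succ_castSucc, Fin.snoc_castSucc, Fin.snoc_castSucc]
        exact hxd j

/-- A proper metric space has asymptotic dimension `0` (for every `D > 0` there is a
uniformly bounded `D`-disjoint cover) if and only if for every `C > 0` the diameters of
all `C`-chains are uniformly bounded from above. -/
theorem asdim_zero_iff_chains_bounded {X : Type*} [MetricSpace X] [ProperSpace X] :
    (∀ D > (0 : ℝ), ∃ 𝒰 : Set (Set X),
      (⋃₀ 𝒰 = Set.univ) ∧
      (∃ M : ℝ, ∀ U ∈ 𝒰, ∀ a ∈ U, ∀ b ∈ U, dist a b ≤ M) ∧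
      (∀ U ∈ 𝒰, ∀ V ∈ 𝒰, U ≠ V → ∀ a ∈ U, ∀ b ∈ V, dist a b > D)) ↔
    (∀ C > (0 : ℝ), ∃ M : ℝ, ∀ k : ℕ, ∀ x : Fin (k + 1) → X,
      (∀ i : Fin k, dist (x i.castSucc) (x i.succ) ≤ C) →
      ∀ i j : Fin (k + 1), dist (x i) (x j) ≤ M) := by
  constructor
  · intro h C hC
    obtain ⟨𝒰, hcov, ⟨M, hM⟩, hdisj⟩ := h C hC
    refine ⟨M, fun k x hx i j => ?_⟩
    -- choose for each point a member of the cover containing it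
    have hmem : ∀ p : X, ∃ U ∈ 𝒰, p ∈ U := by
      intro p
      have : p ∈ ⋃₀ 𝒰 := by rw [hcov]; trivial
      simpa using this
    choose f hf1 hf2 using hmem
    -- every point of the chain lies in f (x 0)
    have key : ∀ n : ℕ, ∀ hn : n < k + 1, x ⟨n, hn⟩ ∈ f (x 0) := by
      intro n
      induction n with
      | zero => intro hn; exact hf2 (x 0)
      | succ m ih =>
        intro hn
        have hm : m < k + 1 := Nat.lt_of_succ_lt hn
        have hmk : m < k := Nat.lt_of_succ_lt_succ hn
        have hih := ih hm
        by_contra hne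
        have hfn : f (x ⟨m + 1, hn⟩) ≠ f (x 0) := by
          intro he
          exact hne (he ▸ hf2 (x ⟨m + 1, hn⟩))
        have hgt := hdisj _ (hf1 (x ⟨m + 1, hn⟩)) _ (hf1 (x 0)) hfn
          _ (hf2 (x ⟨m + 1, hn⟩)) _ hih
        have hle := hx ⟨m, hmk⟩
        have : dist (x ⟨m, hm⟩) (x ⟨m + 1, hn⟩) ≤ C := by
          simpa [Fin.castSucc, Fin.succ] using hle
        rw [dist_comm] at hgt
        exact absurd this (not_le.mpr hgt)
    have hi := key i.1 i.2
    have hj := key j.1 j.2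
    simp only [Fin.eta] at hi hj
    exact hM _ (hf1 (x 0)) _ hi _ hj
  · intro h D hD
    obtain ⟨M, hM⟩ := h D hD
    set R : X → X → Prop := fun u v => dist u v ≤ D with hR
    have hsymm : Symmetric R := fun u v huv => by simp only [hR] at huv ⊢; rwa [dist_comm] at huv
    have hsymm' : Symmetric (Relation.ReflTransGen R) := by
      haveI : Std.Symm R := ⟨hsymm⟩; exact fun a b h => Std.Symm.symm a b h
    have hbound : ∀ a b : X, Relation.ReflTransGen R a b → dist a b ≤ M := by
      intro a b hab
      obtain ⟨k, x, hx0, hxl, hxd⟩ := rtg_to_chain hab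
      have := hM k x hxd 0 (Fin.last k)
      rwa [hx0, hxl] at this
    refine ⟨Set.range (fun a => {b | Relation.ReflTransGen R a b}), ?_, ⟨M, ?_⟩, ?_⟩
    · ext p
      simp only [Set.mem_sUnion, Set.mem_range, Set.mem_univ, iff_true]
      exact ⟨_, ⟨p, rfl⟩, Relation.ReflTransGen.refl⟩
    · rintro U ⟨u, rfl⟩ a ha b hb
      exact hbound a b ((hsymm' ha).trans hb)
    · rintro U ⟨u, rfl⟩ V ⟨v, rfl⟩ hUV a ha b hb
      by_contra hle
      push_neg at hle
      apply hUV
      have hab : Relation.ReflTransGen R a b := Relation.ReflTransGen.single hle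
      have huv : Relation.ReflTransGen R u v :=
        (ha.trans hab).trans (hsymm' hb)
      ext p
      constructor
      · intro hp; exact (hsymm' huv).trans hp
      · intro hp; exact huv.trans hp
end

section
/- In the graph metric d_{n,k} on V(G_{n,k}), defined as the infimum over paths (x₀,…,x_l) in G_{n,k} of Σ‖x_{i−1}−x_i‖_∞, any two vertices are connected by a path, so d_{n,k} is a well-defined metric on V(G_{n,k}) (i.e., G_{n,k} is connected). -/
/-- The vertex set of the graph `G_{n,k}`: points of `ℝⁿ` all of whose coordinates have
absolute value `k`, together with points all of whose coordinates have absolute value `2k`. -/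
def graphVertices (n k : ℕ) : Set (EuclideanSpace ℝ (Fin n)) :=
  {x | (∀ i, |x i| = (k : ℝ)) ∨ (∀ i, |x i| = 2 * (k : ℝ))}

/-- The edge relation of `G_{n,k}`: two vertices are adjacent iff their Euclidean distance
is `2k`, or one is twice the other. -/
def graphEdge (n k : ℕ) (x y : EuclideanSpace ℝ (Fin n)) : Prop :=
  x ∈ graphVertices n k ∧ y ∈ graphVertices n k ∧
    (‖x - y‖ = 2 * (k : ℝ) ∨ y = (2 : ℝ) • x ∨ x = (2 : ℝ) • y)

lemma abs_sub_eq (k a b : ℝ) (hk : 0 ≤ k) (ha : |a| = k) (hb : |b| = k) (hab : a ≠ b) :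
    |a - b| = 2 * k := by
  rcases abs_eq hk |>.mp ha with h1 | h1 <;> rcases abs_eq hk |>.mp hb with h2 | h2 <;>
    subst h1 h2 <;> simp_all <;> rw [abs_eq (by linarith)] <;> [left; right] <;> ring

lemma cube_step (n k : ℕ) (hk : 1 ≤ k) (x : EuclideanSpace ℝ (Fin n)) (i : Fin n) (b : ℝ)
    (hx : ∀ j, |x j| = (k : ℝ)) (hb : |b| = (k : ℝ)) (hne : x i ≠ b) :
    graphEdge n k x (WithLp.toLp 2 (Function.update x.ofLp i b)) := by
  have hk0 : (0:ℝ) ≤ k := Nat.cast_nonneg k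
  have hx' : ∀ j, |(WithLp.toLp 2 (Function.update x.ofLp i b) : EuclideanSpace ℝ (Fin n)) j| = (k : ℝ) := by
    intro j
    rcases eq_or_ne j i with rfl | h
    · simp [hb]
    · simp [Function.update_of_ne h, hx]
  refine ⟨Or.inl hx, Or.inl hx', Or.inl ?_⟩
  rw [EuclideanSpace.norm_eq]
  set y : EuclideanSpace ℝ (Fin n) := WithLp.toLp 2 (Function.update x.ofLp i b) with hy
  have : ∀ j, ‖(x - y) j‖ ^ 2 = if j = i then (2*(k:ℝ))^2 else 0 := by
    intro j
    rcases eq_or_ne j i with rfl | h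
    · simp only [if_pos rfl, PiLp.sub_apply, hy, Function.update_self]
      rw [Real.norm_eq_abs, sq_abs, ← sq_abs, abs_sub_eq k _ _ hk0 (hx j) hb hne]
      simp
    · simp [PiLp.sub_apply, hy, Function.update_of_ne h, h]
  rw [Finset.sum_congr rfl (fun j _ => this j)]
  rw [Finset.sum_ite_eq' Finset.univ i (fun _ => (2*(k:ℝ))^2)]
  simp [Real.sqrt_sq (by linarith : (0:ℝ) ≤ 2*(k:ℝ))]

lemma cube_conn (n k : ℕ) (hk : 1 ≤ k) :
    ∀ (m : ℕ) (x y : EuclideanSpace ℝ (Fin n)),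
    (Finset.univ.filter (fun i => x i ≠ y i)).card ≤ m →
    (∀ i, |x i| = (k:ℝ)) → (∀ i, |y i| = (k:ℝ)) →
    Relation.ReflTransGen (graphEdge n k) x y := by
  intro m
  induction m with
  | zero =>
    intro x y hcard hx hy
    have : x = y := by
      ext i
      by_contra h
      have : i ∈ Finset.univ.filter (fun i => x i ≠ y i) := by simp [h]
      have := Finset.card_pos.mpr ⟨i, this⟩
      omega
    exact this ▸ Relation.ReflTransGen.refl
  | succ m ih =>
    intro x y hcard hx hy
    by_cases hxy : x = y
    · exact hxy ▸ Relation.ReflTransGen.refl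
    · have : ∃ i, x i ≠ y i := by
        by_contra h
        push_neg at h
        exact hxy (PiLp.ext h)
      obtain ⟨i, hi⟩ := this
      set x' : EuclideanSpace ℝ (Fin n) := WithLp.toLp 2 (Function.update x.ofLp i (y i)) with hx'def
      have hedge := cube_step n k hk x i (y i) hx (hy i) hi
      have hx' : ∀ j, |x' j| = (k:ℝ) := by
        intro j
        rcases eq_or_ne j i with rfl | h
        · simp [hx'def, hy]
        · simp [hx'def, Function.update_of_ne h, hx]
      have hsub : Finset.univ.filter (fun j => x' j ≠ y j) ⊆
          (Finset.univ.filter (fun j => x j ≠ y j)).erase i := by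
        intro j hj
        simp only [Finset.mem_filter, Finset.mem_univ, true_and] at hj
        rcases eq_or_ne j i with rfl | h
        · exact absurd (by simp [hx'def]) hj
        · exact Finset.mem_erase.mpr ⟨h, by
            simp only [Finset.mem_filter, Finset.mem_univ, true_and]
            simpa [hx'def, Function.update_of_ne h] using hj⟩
      have hcard' : (Finset.univ.filter (fun j => x' j ≠ y j)).card ≤ m := by
        have h1 := Finset.card_le_card hsub
        have h2 : i ∈ Finset.univ.filter (fun j => x j ≠ y j) := by simp [hi]
        have h3 := Finset.card_erase_of_mem h2
        omega
      exact Relation.ReflTransGen.head hedge (ih x' y hcard' hx' hy)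

lemma to_inner (n k : ℕ) (hk : 1 ≤ k) (x : EuclideanSpace ℝ (Fin n))
    (hx : x ∈ graphVertices n k) :
    ∃ y, (∀ i, |y i| = (k:ℝ)) ∧ Relation.ReflTransGen (graphEdge n k) x y := by
  rcases hx with hx | hx
  · exact ⟨x, hx, Relation.ReflTransGen.refl⟩
  · refine ⟨(2:ℝ)⁻¹ • x, fun i => ?_, Relation.ReflTransGen.single ?_⟩
    · rw [PiLp.smul_apply, smul_eq_mul, abs_mul, hx i, abs_of_nonneg (by norm_num : (0:ℝ) ≤ 2⁻¹)]
      ring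
    · have hy : ∀ i, |((2:ℝ)⁻¹ • x) i| = (k:ℝ) := by
        intro i
        rw [PiLp.smul_apply, smul_eq_mul, abs_mul, hx i, abs_of_nonneg (by norm_num : (0:ℝ) ≤ 2⁻¹)]
        ring
      exact ⟨Or.inr hx, Or.inl hy, Or.inr (Or.inr (by rw [smul_smul]; norm_num))⟩

/-- The graph `G_{n,k}` is connected (for `n ≥ 2`, `k ≥ 1`): any two vertices are joined
by a path, so the path metric `d_{n,k}` is a well-defined metric on `V(G_{n,k})`. -/
theorem graph_connected (n k : ℕ) (hn : 2 ≤ n) (hk : 1 ≤ k) :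
    ∀ x ∈ graphVertices n k, ∀ y ∈ graphVertices n k,
      Relation.ReflTransGen (graphEdge n k) x y := by
  intro x hx y hy
  obtain ⟨x', hx'I, hxx'⟩ := to_inner n k hk x hx
  obtain ⟨y', hy'I, hyy'⟩ := to_inner n k hk y hy
  have hmid := cube_conn n k hk (Finset.univ.filter (fun i => x' i ≠ y' i)).card x' y'
    le_rfl hx'I hy'I
  have hsymm : ∀ a b, graphEdge n k a b → graphEdge n k b a := by
    rintro a b ⟨ha, hb, h | h | h⟩
    · exact ⟨hb, ha, Or.inl (by rwa [← norm_neg, neg_sub])⟩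
    · exact ⟨hb, ha, Or.inr (Or.inr h)⟩
    · exact ⟨hb, ha, Or.inr (Or.inl h)⟩
  have hyy'' : Relation.ReflTransGen (graphEdge n k) y' y :=
    (@Relation.ReflTransGen.stdSymm _ _ ⟨fun a b h => hsymm a b h⟩).symm _ _ hyy'
  exact (hxx'.trans hmid).trans hyy''
end
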